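/- For every ε ∈ (0,1), as t → +∞ the functions s ↦ (8e^{3t}/(1 + 2e^{t} + e^{2t}(1−s²))²) · F(3/2, 3/2; 2; ((1−e^{−t})² − s²)/((1+e^{−t})² − s²)) converge uniformly on the interval [0, 1−ε] to the function s ↦ 8/(π(1−s²)). -/

import Mathlib

open Real Filter

/-- The Gauss (ordinary) hypergeometric function
`F(a,b;c;z) = ∑_{k≥0} ((a)_k (b)_k)/((c)_k k!) z^k`, with real parameters,
where `(q)_k` is the Pochhammer rising factorial. -/
noncomputable def hypergeom (a b c z : ℝ) : ℝ :=
  ∑' k : ℕ, ((ascPochhammer ℝ k).eval a * (ascPochhammer ℝ k).eval b) /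
    ((ascPochhammer ℝ k).eval c * (Nat.factorial k : ℝ)) * z ^ k

noncomputable def hcoef (k : ℕ) : ℝ :=
  ((ascPochhammer ℝ k).eval (3/2) * (ascPochhammer ℝ k).eval (3/2)) /
    ((ascPochhammer ℝ k).eval 2 * (Nat.factorial k : ℝ))

lemma asc_eval_pos {r : ℝ} (hr : 0 < r) (k : ℕ) : 0 < (ascPochhammer ℝ k).eval r := by
  induction k with
  | zero => simp
  | succ n ih =>
    rw [ascPochhammer_succ_right]
    simp only [Polynomial.eval_mul, Polynomial.eval_add, Polynomial.eval_X,
      Polynomial.eval_natCast]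
    positivity

lemma hcoef_pos (k : ℕ) : 0 < hcoef k := by
  have h1 := asc_eval_pos (by norm_num : (0:ℝ) < 3/2) k
  have h2 := asc_eval_pos (by norm_num : (0:ℝ) < 2) k
  have h3 : (0:ℝ) < (Nat.factorial k : ℝ) := by positivity
  unfold hcoef; positivity

lemma hcoef_zero : hcoef 0 = 1 := by simp [hcoef]

lemma hcoef_succ (k : ℕ) :
    hcoef (k+1) = hcoef k * ((k + 3/2)^2 / ((k + 2) * (k + 1))) := by
  have h1 := asc_eval_pos (by norm_num : (0:ℝ) < 3/2) k
  have h2 := asc_eval_pos (by norm_num : (0:ℝ) < 2) k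
  have h3 : (0:ℝ) < (Nat.factorial k : ℝ) := by positivity
  unfold hcoef
  rw [ascPochhammer_succ_right]
  simp only [Polynomial.eval_mul, Polynomial.eval_add, Polynomial.eval_X,
    Polynomial.eval_natCast, Nat.factorial_succ, Nat.cast_mul, Nat.cast_add, Nat.cast_one]
  field_simp
  ring

open Real.Wallis in
lemma hcoef_W (k : ℕ) : hcoef k * ((k:ℝ) + 1) * W k = 2 * k + 1 := by
  induction k with
  | zero => simp [hcoef_zero, W]
  | succ n ih =>
    rw [hcoef_succ, W_succ]
    have hW := W_pos n
    have hc := hcoef_pos n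
    push_cast
    have h1 : ((n:ℝ)+1) ≠ 0 := by positivity
    have h2 : ((n:ℝ)+2) ≠ 0 := by positivity
    have h3 : (2*(n:ℝ)+1) ≠ 0 := by positivity
    have h4 : (2*(n:ℝ)+3) ≠ 0 := by positivity
    have hc' : hcoef n = (2*(n:ℝ)+1)/(((n:ℝ)+1) * W n) := by
      field_simp
      linarith [ih]
    rw [hc']
    field_simp
    ring

open Real.Wallis in
lemma hcoef_eq (k : ℕ) : hcoef k = (2 * k + 1) / (((k:ℝ) + 1) * W k) := by
  have hW := W_pos k
  have := hcoef_W k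
  field_simp
  linarith [this]

lemma hcoef_mono : Monotone hcoef := by
  apply monotone_nat_of_le_succ
  intro k
  rw [hcoef_succ]
  have hc := hcoef_pos k
  have h : (1:ℝ) ≤ ((k:ℝ) + 3/2)^2 / (((k:ℝ) + 2) * ((k:ℝ) + 1)) := by
    rw [le_div_iff₀ (by positivity)]
    nlinarith [Nat.cast_nonneg (α := ℝ) k]
  nlinarith

open Real.Wallis in
lemma hcoef_tendsto : Tendsto hcoef atTop (nhds (4/π)) := by
  have hW := tendsto_W_nhds_pi_div_two
  have h1 : Tendsto (fun k : ℕ => (2*(k:ℝ)+1)/((k:ℝ)+1)) atTop (nhds 2) := by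
    have : (fun k : ℕ => (2*(k:ℝ)+1)/((k:ℝ)+1)) =
        fun k : ℕ => 2 - 1/((k:ℝ)+1) := by
      funext k
      have : ((k:ℝ)+1) ≠ 0 := by positivity
      field_simp
      ring
    rw [this]
    have ht : Tendsto (fun k : ℕ => 1/((k:ℝ)+1)) atTop (nhds 0) :=
      tendsto_one_div_add_atTop_nhds_zero_nat
    have := (tendsto_const_nhds (x := (2:ℝ))).sub ht
    simpa using this
  have h2 : Tendsto (fun k : ℕ => (2*(k:ℝ)+1)/((k:ℝ)+1) / W k) atTop (nhds (2 / (π/2))) :=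
    h1.div hW (by positivity)
  have heq : (fun k : ℕ => (2*(k:ℝ)+1)/((k:ℝ)+1) / W k) = hcoef := by
    funext k
    rw [hcoef_eq, div_div]
  rw [heq] at h2
  convert h2 using 2
  field_simp
  ring

lemma hcoef_le (k : ℕ) : hcoef k ≤ 4/π := hcoef_mono.ge_of_tendsto hcoef_tendsto k

noncomputable def hd : ℕ → ℝ
  | 0 => 1
  | (k+1) => hcoef (k+1) - hcoef k

lemma hd_nonneg (k : ℕ) : 0 ≤ hd k := by
  cases k with
  | zero => norm_num [hd]
  | succ n => simpa [hd] using hcoef_mono (Nat.le_succ n)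

lemma hd_sum_range (n : ℕ) : ∑ i ∈ Finset.range (n+1), hd i = hcoef n := by
  induction n with
  | zero => simp [hd, hcoef_zero]
  | succ m ih => rw [Finset.sum_range_succ, ih]; simp [hd]

lemma hd_summable : Summable hd := by
  apply summable_of_sum_range_le hd_nonneg
  intro n
  cases n with
  | zero => simpa using div_nonneg (by norm_num : (0:ℝ) ≤ 4) Real.pi_pos.le
  | succ m => rw [hd_sum_range]; exact hcoef_le m

lemma hd_tsum : ∑' k, hd k = 4/π := by
  have h1 : Tendsto (fun n => ∑ i ∈ Finset.range n, hd i) atTop (nhds (∑' k, hd k)) :=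
    hd_summable.hasSum.tendsto_sum_nat
  have h2 : Tendsto (fun n => ∑ i ∈ Finset.range (n+1), hd i) atTop (nhds (4/π)) := by
    simpa only [hd_sum_range] using hcoef_tendsto
  rw [← tendsto_add_atTop_iff_nat 1] at h1
  exact tendsto_nhds_unique h1 h2

noncomputable def G (z : ℝ) : ℝ := ∑' k, hd k * z^k

lemma Gd_summable {z : ℝ} (hz : |z| ≤ 1) : Summable (fun k => hd k * z^k) := by
  apply Summable.of_abs
  apply hd_summable.of_nonneg_of_le (fun k => abs_nonneg _)
  intro k
  rw [abs_mul, abs_pow]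
  calc |hd k| * |z|^k ≤ hd k * 1 := by
        rw [abs_of_nonneg (hd_nonneg k)]
        exact mul_le_mul_of_nonneg_left (pow_le_one₀ (abs_nonneg z) hz) (hd_nonneg k)
    _ = hd k := mul_one _

lemma hcoef_summable {z : ℝ} (hz : |z| < 1) : Summable (fun k => hcoef k * z^k) := by
  apply Summable.of_abs
  refine ((summable_geometric_of_lt_one (abs_nonneg z) hz).mul_left
    (4/π)).of_nonneg_of_le (fun k => abs_nonneg _) ?_
  intro k
  rw [abs_mul, abs_pow, abs_of_nonneg (hcoef_pos k).le]
  exact mul_le_mul_of_nonneg_right (hcoef_le k) (by positivity)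

lemma G_eq_mul {z : ℝ} (hz : |z| < 1) : G z = (1 - z) * ∑' k, hcoef k * z^k := by
  have hS := hcoef_summable hz
  have hS1 : Summable (fun k => hcoef (k+1) * z^(k+1)) := by
    exact (summable_nat_add_iff 1).mpr hS
  have hS2 : Summable (fun k => hcoef k * z^(k+1)) := by
    have : (fun k => hcoef k * z^(k+1)) = fun k => z * (hcoef k * z^k) := by
      funext k; ring
    rw [this]
    exact hS.mul_left z
  have hG := Gd_summable hz.le
  rw [G, hG.tsum_eq_zero_add]
  have he : ∀ k : ℕ, hd (k+1) * z^(k+1) = hcoef (k+1) * z^(k+1) - hcoef k * z^(k+1) := by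
    intro k; simp [hd]; ring
  simp only [he]
  rw [Summable.tsum_sub hS1 hS2]
  have e1 : ∑' k, hcoef (k+1) * z^(k+1) = (∑' k, hcoef k * z^k) - 1 := by
    rw [hS.tsum_eq_zero_add]
    simp [hcoef_zero]
  have e2 : ∑' k, hcoef k * z^(k+1) = z * ∑' k, hcoef k * z^k := by
    rw [← tsum_mul_left]
    congr 1; funext k; ring
  rw [e1, e2]
  simp [hd, hcoef_zero]
  ring

lemma G_one : G 1 = 4/π := by simp [G, hd_tsum]

lemma G_continuousOn : ContinuousOn G (Set.Icc (0:ℝ) 1) := by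
  have h : TendstoUniformlyOn (fun (N : ℕ) z => ∑ k ∈ Finset.range N, hd k * z^k)
      (fun z => ∑' k, hd k * z^k) atTop (Set.Icc (0:ℝ) 1) := by
    apply tendstoUniformlyOn_tsum_nat hd_summable
    intro k z hz
    rw [Real.norm_eq_abs, abs_mul, abs_pow, abs_of_nonneg (hd_nonneg k)]
    calc hd k * |z|^k ≤ hd k * 1 := by
          apply mul_le_mul_of_nonneg_left _ (hd_nonneg k)
          exact pow_le_one₀ (abs_nonneg z) (abs_le.mpr ⟨by linarith [hz.1], hz.2⟩)
      _ = hd k := mul_one _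
  exact h.continuousOn (Filter.Eventually.frequently (Filter.Eventually.of_forall fun n => by
    apply Continuous.continuousOn
    continuity))


/-- For every `ε ∈ (0,1)`, as `t → +∞`, the functions
`s ↦ (8e^{3t}/(1 + 2e^t + e^{2t}(1−s²))²) · F(3/2, 3/2; 2; ((1−e^{−t})²−s²)/((1+e^{−t})²−s²))`
converge uniformly on `[0, 1−ε]` to `s ↦ 8/(π(1−s²))`. -/
theorem stmt_5 (ε : ℝ) (hε : ε ∈ Set.Ioo (0:ℝ) 1) :
    TendstoUniformlyOn
      (fun (t : ℝ) (s : ℝ) =>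
        (8 * Real.exp (3 * t) / (1 + 2 * Real.exp t + Real.exp (2 * t) * (1 - s ^ 2)) ^ 2) *
          hypergeom (3/2) (3/2) 2
            (((1 - Real.exp (-t)) ^ 2 - s ^ 2) / ((1 + Real.exp (-t)) ^ 2 - s ^ 2)))
      (fun s : ℝ => 8 / (π * (1 - s ^ 2)))
      atTop (Set.Icc 0 (1 - ε)) := by
  obtain ⟨hε0, hε1⟩ := hε
  set E : ℝ := 1 - (1-ε)^2 with hEdef
  have hE0 : 0 < E := by nlinarith
  have hE1 : E ≤ 1 := by nlinarith
  rw [Metric.tendstoUniformlyOn_iff]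
  intro δ hδ
  have hcw : ContinuousWithinAt G (Set.Icc 0 1) 1 :=
    G_continuousOn 1 (by norm_num)
  rw [Metric.continuousWithinAt_iff] at hcw
  obtain ⟨η, hη0, hη⟩ := hcw (δ*E/4) (by positivity)
  have hx0 : Tendsto (fun t : ℝ => Real.exp (-t)) atTop (nhds 0) := by
    exact Real.tendsto_exp_atBot.comp tendsto_neg_atTop_atBot
  have hc : (0:ℝ) < min ε (min (δ*E^2/32) (η*E/4)) := by positivity
  filter_upwards [hx0.eventually_lt_const hc] with t ht
  intro s hs
  obtain ⟨hs1, hs2⟩ := hs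
  set x := Real.exp (-t) with hxdef
  have hx : 0 < x := Real.exp_pos _
  have hxε : x < ε := lt_of_lt_of_le ht (min_le_left _ _)
  have hxδ : x < δ*E^2/32 := lt_of_lt_of_le ht ((min_le_right _ _).trans (min_le_left _ _))
  have hxη : x < η*E/4 := lt_of_lt_of_le ht ((min_le_right _ _).trans (min_le_right _ _))
  set D := (1 + x)^2 - s^2 with hDdef
  set N := (1 - x)^2 - s^2 with hNdef
  set z := N / D with hzdef
  have hs2' : s^2 ≤ (1-ε)^2 := by nlinarith
  have hEs : E ≤ 1 - s^2 := by nlinarith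
  have hDeq : D = 1 - s^2 + (2*x + x^2) := by rw [hDdef]; ring
  have h2x : (0:ℝ) ≤ 2*x + x^2 := by positivity
  have hED : E ≤ D := by linarith
  have hD0 : 0 < D := lt_of_lt_of_le hE0 hED
  have hsx : s ≤ 1 - x := by linarith
  have hsx2 : s^2 ≤ (1-x)^2 := pow_le_pow_left₀ hs1 hsx 2
  have hN0 : 0 ≤ N := by rw [hNdef]; linarith
  have hDN : D - N = 4*x := by rw [hDdef, hNdef]; ring
  have hz0 : 0 ≤ z := div_nonneg hN0 hD0.le
  have hz1 : z < 1 := by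
    rw [hzdef, div_lt_one hD0]
    linarith [hDN]
  have hzabs : |z| < 1 := abs_lt.mpr ⟨by linarith, hz1⟩
  have h1z : 1 - z = 4*x/D := by
    rw [hzdef]
    field_simp
    linarith
  -- rewrite the function value
  have hFdef : hypergeom (3/2) (3/2) 2 z = ∑' k, hcoef k * z^k := rfl
  have h1zpos : 0 < 1 - z := by linarith
  have hFz : hypergeom (3/2) (3/2) 2 z = G z / (1 - z) := by
    rw [hFdef, G_eq_mul hzabs, mul_comm, mul_div_assoc, div_self h1zpos.ne', mul_one]
  have hu : 0 < Real.exp t := Real.exp_pos t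
  have hxu : x = (Real.exp t)⁻¹ := Real.exp_neg t
  have he2 : Real.exp (2*t) = (Real.exp t)^2 := by
    rw [two_mul, Real.exp_add]; ring
  have he3 : Real.exp (3*t) = (Real.exp t)^3 := by
    rw [show (3:ℝ)*t = t + (t + t) by ring, Real.exp_add, Real.exp_add]; ring
  have hdenom : 1 + 2*Real.exp t + Real.exp (2*t)*(1-s^2) = (Real.exp t)^2 * D := by
    rw [he2, hDdef, hxu]
    field_simp
    ring
  have key : (8 * Real.exp (3 * t) / (1 + 2 * Real.exp t + Real.exp (2 * t) * (1 - s ^ 2)) ^ 2) *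
      hypergeom (3/2) (3/2) 2 z = 2 * G z / D := by
    rw [hFz, h1z, he3, hdenom, hxu]
    field_simp
    ring
  rw [key]
  -- the estimate
  have hdist : dist z 1 < η := by
    rw [Real.dist_eq, abs_of_nonpos (by linarith), neg_sub, h1z, div_lt_iff₀ hD0]
    calc 4*x < 4*(η*E/4) := by linarith
      _ = η*E := by ring
      _ ≤ η*D := mul_le_mul_of_nonneg_left hED hη0.le
  have hA : |G z - 4/π| < δ*E/4 := by
    have := hη ⟨hz0, hz1.le⟩ hdist
    rwa [Real.dist_eq, G_one] at this
  have hπ3 : (3:ℝ) < π := Real.pi_gt_three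
  have h1s : 0 < 1 - s^2 := lt_of_lt_of_le hE0 hEs
  rw [Real.dist_eq]
  have expand : 8/(π*(1-s^2)) - 2*G z/D
      = -(2*(G z - 4/π)/D) + (8/π)*((2*x+x^2)/(D*(1-s^2))) := by
    field_simp
    ring
  rw [expand]
  have t1 : |(-(2*(G z - 4/π)/D))| < δ/2 := by
    rw [abs_neg, abs_div, abs_of_pos hD0, div_lt_iff₀ hD0, abs_mul]
    rw [abs_of_nonneg (by norm_num : (0:ℝ) ≤ 2)]
    calc 2 * |G z - 4/π| < 2 * (δ*E/4) := by linarith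
      _ = δ/2 * E := by ring
      _ ≤ δ/2 * D := mul_le_mul_of_nonneg_left hED (by positivity)
  have t2 : (8/π)*((2*x+x^2)/(D*(1-s^2))) ≤ δ/4 := by
    have hv1 : (2*x+x^2)/(D*(1-s^2)) ≤ 3*x/E^2 := by
      have hx1 : x ≤ 1 := by linarith
      have hxx : x^2 ≤ x := by rw [sq]; exact mul_le_of_le_one_left hx.le hx1
      have hb : E^2 ≤ D*(1-s^2) := by
        rw [sq]
        exact mul_le_mul hED hEs hE0.le hD0.le
      exact div_le_div₀ (by positivity) (by linarith) (by positivity) hb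
    have hv2 : (8:ℝ)/π ≤ 8/3 := by
      rw [div_le_div_iff₀ Real.pi_pos (by norm_num)]
      linarith
    calc (8/π)*((2*x+x^2)/(D*(1-s^2))) ≤ (8/3)*(3*x/E^2) := by
          apply mul_le_mul hv2 hv1 (by positivity) (by norm_num)
      _ = 8*x/E^2 := by ring
      _ ≤ δ/4 := by
          rw [div_le_div_iff₀ (by positivity) (by norm_num : (0:ℝ) < 4)]
          calc 8*x*4 = 32*x := by ring
            _ ≤ 32*(δ*E^2/32) := mul_le_mul_of_nonneg_left hxδ.le (by norm_num)
            _ = δ*E^2 := by ring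
  have t2' : (0:ℝ) ≤ (8/π)*((2*x+x^2)/(D*(1-s^2))) := by positivity
  calc |(-(2*(G z - 4/π)/D)) + (8/π)*((2*x+x^2)/(D*(1-s^2)))|
      ≤ |(-(2*(G z - 4/π)/D))| + |(8/π)*((2*x+x^2)/(D*(1-s^2)))| := abs_add_le _ _
    _ < δ := by rw [abs_of_nonneg t2']; linarith
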